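/- If x is irrational, then the weighted averages (∑_{k=1}^{N} k²·sin²(kπx)) / (∑_{k=1}^{N} k²) converge to 1/2 as N → ∞. -/

import Mathlib

open Real Filter

private lemma abel_identity (c : ℕ → ℝ) (N : ℕ) :
    ∑ k ∈ Finset.Icc 1 N, (k : ℝ) ^ 2 * c k
      = (N : ℝ) ^ 2 * (∑ k ∈ Finset.Icc 1 N, c k)
        - ∑ k ∈ Finset.range N,
            (((k : ℝ) + 1) ^ 2 - (k : ℝ) ^ 2) * (∑ j ∈ Finset.Icc 1 k, c j) := by
  induction N with
  | zero => simp
  | succ n ih =>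
    rw [Finset.sum_Icc_succ_top (by omega : (1:ℕ) ≤ n + 1),
      Finset.sum_Icc_succ_top (by omega : (1:ℕ) ≤ n + 1), Finset.sum_range_succ, ih]
    push_cast
    ring

private lemma sum_odd (N : ℕ) :
    ∑ k ∈ Finset.range N, (2 * (k : ℝ) + 1) = (N : ℝ) ^ 2 := by
  induction N with
  | zero => simp
  | succ n ih => rw [Finset.sum_range_succ, ih]; push_cast; ring

private lemma abel_bound (c : ℕ → ℝ) (C : ℝ)
    (hC : ∀ n : ℕ, |∑ k ∈ Finset.Icc 1 n, c k| ≤ C) (N : ℕ) :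
    |∑ k ∈ Finset.Icc 1 N, (k : ℝ) ^ 2 * c k| ≤ 2 * C * (N : ℝ) ^ 2 := by
  rw [abel_identity]
  have h1 : |(N : ℝ) ^ 2 * (∑ k ∈ Finset.Icc 1 N, c k)| ≤ (N : ℝ) ^ 2 * C := by
    rw [abs_mul, abs_of_nonneg (by positivity : (0:ℝ) ≤ (N:ℝ)^2)]
    exact mul_le_mul_of_nonneg_left (hC N) (by positivity)
  have h2 : |∑ k ∈ Finset.range N,
      (((k : ℝ) + 1) ^ 2 - (k : ℝ) ^ 2) * (∑ j ∈ Finset.Icc 1 k, c j)| ≤ (N : ℝ) ^ 2 * C := by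
    calc |∑ k ∈ Finset.range N,
        (((k : ℝ) + 1) ^ 2 - (k : ℝ) ^ 2) * (∑ j ∈ Finset.Icc 1 k, c j)|
        ≤ ∑ k ∈ Finset.range N,
          |(((k : ℝ) + 1) ^ 2 - (k : ℝ) ^ 2) * (∑ j ∈ Finset.Icc 1 k, c j)| :=
          Finset.abs_sum_le_sum_abs _ _
      _ ≤ ∑ k ∈ Finset.range N, (2 * (k : ℝ) + 1) * C := by
          apply Finset.sum_le_sum
          intro k _
          rw [abs_mul]
          have hk : ((k : ℝ) + 1) ^ 2 - (k : ℝ) ^ 2 = 2 * (k : ℝ) + 1 := by ring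
          rw [hk, abs_of_nonneg (by positivity : (0:ℝ) ≤ 2 * (k:ℝ) + 1)]
          exact mul_le_mul_of_nonneg_left (hC k) (by positivity)
      _ = (N : ℝ) ^ 2 * C := by rw [← Finset.sum_mul, sum_odd]
  calc |(N : ℝ) ^ 2 * (∑ k ∈ Finset.Icc 1 N, c k)
      - ∑ k ∈ Finset.range N,
          (((k : ℝ) + 1) ^ 2 - (k : ℝ) ^ 2) * (∑ j ∈ Finset.Icc 1 k, c j)|
      ≤ |(N : ℝ) ^ 2 * (∑ k ∈ Finset.Icc 1 N, c k)|
        + |∑ k ∈ Finset.range N,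
            (((k : ℝ) + 1) ^ 2 - (k : ℝ) ^ 2) * (∑ j ∈ Finset.Icc 1 k, c j)| := abs_sub _ _
    _ ≤ (N : ℝ) ^ 2 * C + (N : ℝ) ^ 2 * C := add_le_add h1 h2
    _ = 2 * C * (N : ℝ) ^ 2 := by ring

private lemma sq_sum_lb (N : ℕ) :
    (N : ℝ) ^ 3 / 3 ≤ ∑ k ∈ Finset.Icc 1 N, (k : ℝ) ^ 2 := by
  induction N with
  | zero => simp
  | succ n ih =>
    rw [Finset.sum_Icc_succ_top (by omega : (1:ℕ) ≤ n + 1)]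
    push_cast
    push_cast at ih
    nlinarith [Nat.cast_nonneg (α := ℝ) n]

private lemma cos_partial_bound (x : ℝ) (hx : Irrational x) :
    ∃ C : ℝ, ∀ N : ℕ, |∑ k ∈ Finset.Icc 1 N, Real.cos (2 * ((k : ℝ) * Real.pi * x))| ≤ C := by
  set z : ℂ := Complex.exp ((2 * Real.pi * x : ℝ) * Complex.I) with hz
  have hz1 : z ≠ 1 := by
    intro h
    rw [hz, Complex.exp_eq_one_iff] at h
    obtain ⟨n, hn⟩ := h
    have hn' : ((2 * Real.pi * x : ℝ) : ℂ) * Complex.I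
        = ((n * (2 * Real.pi) : ℝ) : ℂ) * Complex.I := by
      rw [hn]; push_cast; ring
    have h2 := mul_right_cancel₀ Complex.I_ne_zero hn'
    have h3 : 2 * Real.pi * x = n * (2 * Real.pi) := by exact_mod_cast h2
    have h4 := mul_left_cancel₀ (show (2 * Real.pi : ℝ) ≠ 0 by positivity)
      (h3.trans (by ring : (n : ℝ) * (2 * Real.pi) = 2 * Real.pi * n))
    exact hx.ne_int n h4
  have habs : ‖z‖ = 1 := Complex.norm_exp_ofReal_mul_I _
  have hgeo : ∀ N : ℕ, (z - 1) * (∑ k ∈ Finset.Icc 1 N, z ^ k) = z ^ (N + 1) - z := by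
    intro N
    induction N with
    | zero => simp
    | succ n ih =>
      rw [Finset.sum_Icc_succ_top (by omega : (1:ℕ) ≤ n + 1), mul_add, ih]
      ring
  refine ⟨2 / ‖z - 1‖, fun N => ?_⟩
  have hre : ∀ k ∈ Finset.Icc 1 N, Real.cos (2 * ((k : ℝ) * Real.pi * x)) = (z ^ k).re := by
    intro k _
    rw [hz, ← Complex.exp_nat_mul]
    have : (k : ℂ) * (((2 * Real.pi * x : ℝ) : ℂ) * Complex.I)
        = ((2 * ((k : ℝ) * Real.pi * x) : ℝ) : ℂ) * Complex.I := by push_cast; ring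
    rw [this, Complex.exp_ofReal_mul_I_re]
  rw [Finset.sum_congr rfl hre, ← Complex.re_sum]
  have hne : ‖z - 1‖ ≠ 0 := by
    simp only [ne_eq, norm_eq_zero, sub_eq_zero]; exact hz1
  have hpos : 0 < ‖z - 1‖ := lt_of_le_of_ne (by positivity) (Ne.symm hne)
  have hsz : ‖∑ k ∈ Finset.Icc 1 N, z ^ k‖ ≤ 2 / ‖z - 1‖ := by
    rw [le_div_iff₀ hpos, mul_comm]
    calc ‖z - 1‖ * ‖∑ k ∈ Finset.Icc 1 N, z ^ k‖
        = ‖z ^ (N + 1) - z‖ := by rw [← norm_mul, hgeo]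
      _ ≤ ‖z ^ (N + 1)‖ + ‖z‖ := by
          simpa [sub_eq_add_neg] using norm_add_le (z ^ (N + 1)) (-z)
      _ ≤ 2 := by rw [norm_pow, habs]; norm_num
  exact le_trans (Complex.abs_re_le_norm _) hsz

/-- For irrational `x`, the weighted averages of `sin²(kπx)` with weights `k²`
converge to `1/2`. -/
theorem weighted_sin_sq_irrational (x : ℝ) (hx : Irrational x) :
    Tendsto (fun N : ℕ =>
        (∑ k ∈ Finset.Icc 1 N, (k : ℝ) ^ 2 * Real.sin ((k : ℝ) * Real.pi * x) ^ 2)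
          / ∑ k ∈ Finset.Icc 1 N, (k : ℝ) ^ 2)
      atTop (nhds (1 / 2)) := by
  obtain ⟨C, hC⟩ := cos_partial_bound x hx
  have hC0 : 0 ≤ C := (abs_nonneg _).trans (hC 0)
  set c : ℕ → ℝ := fun k => Real.cos (2 * ((k : ℝ) * Real.pi * x)) with hc
  rw [← tendsto_sub_nhds_zero_iff]
  apply squeeze_zero_norm' (a := fun N : ℕ => 3 * C / N)
  · filter_upwards [eventually_ge_atTop 1] with N hN
    set Q : ℝ := ∑ k ∈ Finset.Icc 1 N, (k : ℝ) ^ 2 with hQdef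
    set T : ℝ := ∑ k ∈ Finset.Icc 1 N, (k : ℝ) ^ 2 * c k with hTdef
    have hNpos : (1 : ℝ) ≤ (N : ℝ) := by exact_mod_cast hN
    have hQlb : (N : ℝ) ^ 3 / 3 ≤ Q := sq_sum_lb N
    have hQpos : 0 < Q := lt_of_lt_of_le (by positivity) hQlb
    have hW : ∑ k ∈ Finset.Icc 1 N, (k : ℝ) ^ 2 * Real.sin ((k : ℝ) * Real.pi * x) ^ 2
        = Q / 2 - T / 2 := by
      rw [hQdef, hTdef, Finset.sum_div, Finset.sum_div, ← Finset.sum_sub_distrib]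
      apply Finset.sum_congr rfl
      intro k _
      have hsin : Real.sin ((k : ℝ) * Real.pi * x) ^ 2
          = 1 / 2 - Real.cos (2 * ((k : ℝ) * Real.pi * x)) / 2 := by
        have h1 := Real.cos_two_mul ((k : ℝ) * Real.pi * x)
        have h2 := Real.sin_sq ((k : ℝ) * Real.pi * x)
        nlinarith
      rw [hsin, hc]
      ring
    have hTbound : |T| ≤ 2 * C * (N : ℝ) ^ 2 := abel_bound c C hC N
    have heq : (Q / 2 - T / 2) / Q - 1 / 2 = -T / (2 * Q) := by
      field_simp
      ring
    simp only [hW, heq, Real.norm_eq_abs]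
    rw [abs_div, abs_neg, abs_of_pos (by positivity : (0:ℝ) < 2 * Q)]
    rw [div_le_div_iff₀ (by positivity) (by positivity)]
    calc |T| * (N : ℝ) ≤ 2 * C * (N : ℝ) ^ 2 * (N : ℝ) :=
          mul_le_mul_of_nonneg_right hTbound (by positivity)
      _ ≤ 3 * C * (2 * Q) := by nlinarith
  · exact tendsto_const_div_atTop_nhds_zero_nat (3 * C)
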